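/- arXiv:2305.02989 — 3 statements merged into one kernel-verified Lean document; each statement's English description precedes it below -/
import Mathlib

section
/- The limit lim_{q → 1⁻} (1 - q) · ∏_{n=1}^∞ (1 - q^{2n})^4 / (1 - q^n)^2 = π/2 holds, where q ranges over real numbers in (0,1). (An equivalent form of Wallis's product formula.) -/
open Real Filter

private noncomputable def SS (m : ℕ) (q : ℝ) : ℝ := ∑ k ∈ Finset.range m, q ^ k

private noncomputable def WW (n : ℕ) : ℝ :=
  (2 * (n : ℝ) + 2) ^ 2 / ((2 * (n : ℝ) + 1) * (2 * (n : ℝ) + 3))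

private noncomputable def ll (n : ℕ) (q : ℝ) : ℝ :=
  Real.log ((SS (2 * n + 2) q) ^ 2 / (SS (2 * n + 1) q * SS (2 * n + 3) q))

private lemma SS_pos {q : ℝ} (hq0 : 0 < q) {m : ℕ} (hm : 0 < m) : 0 < SS m q :=
  Finset.sum_pos (fun k _ => pow_pos hq0 k) (Finset.nonempty_range_iff.2 hm.ne')

private lemma SS_one (m : ℕ) : SS m 1 = m := by simp [SS]

private lemma SS_continuous (m : ℕ) : Continuous fun q : ℝ => SS m q :=
  continuous_finset_sum _ fun k _ => continuous_pow k

private lemma SS_mul_one_sub (q : ℝ) (m : ℕ) : (1 - q) * SS m q = 1 - q ^ m := by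
  have h := geom_sum_mul q m
  unfold SS
  linear_combination -h

/-- Cauchy–Schwarz-type bound: `(M+1)^2 q^M ≤ (1 + q + ⋯ + q^M)^2`. -/
private lemma cs_ineq {q : ℝ} (hq0 : 0 < q) (M : ℕ) :
    ((M : ℝ) + 1) ^ 2 * q ^ M ≤ (SS (M + 1) q) ^ 2 := by
  have h1 : ∀ k ∈ Finset.range (M + 1), 2 * Real.sqrt (q ^ M) ≤ q ^ k + q ^ (M - k) := by
    intro k hk
    have hk' : k ≤ M := Nat.lt_succ_iff.mp (Finset.mem_range.mp hk)
    have hmul : q ^ k * q ^ (M - k) = q ^ M := by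
      rw [← pow_add]; congr 1; omega
    have hs : Real.sqrt (q ^ k) * Real.sqrt (q ^ (M - k)) = Real.sqrt (q ^ M) := by
      rw [← Real.sqrt_mul (pow_nonneg hq0.le k), hmul]
    nlinarith [sq_nonneg (Real.sqrt (q ^ k) - Real.sqrt (q ^ (M - k))),
      Real.sq_sqrt (pow_nonneg hq0.le k), Real.sq_sqrt (pow_nonneg hq0.le (M - k))]
  have h2 := Finset.sum_le_sum h1
  rw [Finset.sum_const, Finset.card_range, Finset.sum_add_distrib] at h2
  have hrefl : ∑ k ∈ Finset.range (M + 1), q ^ (M - k)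
      = ∑ k ∈ Finset.range (M + 1), q ^ k := by
    have := Finset.sum_range_reflect (fun j => q ^ j) (M + 1)
    simpa using this
  rw [hrefl] at h2
  have h3 : ((M : ℝ) + 1) * Real.sqrt (q ^ M) ≤ SS (M + 1) q := by
    unfold SS
    rw [nsmul_eq_mul] at h2
    push_cast at h2
    nlinarith [h2]
  have h4 : 0 ≤ ((M : ℝ) + 1) * Real.sqrt (q ^ M) := by positivity
  calc ((M : ℝ) + 1) ^ 2 * q ^ M = (((M : ℝ) + 1) * Real.sqrt (q ^ M)) ^ 2 := by
        rw [mul_pow, Real.sq_sqrt (pow_nonneg hq0.le M)]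
    _ ≤ (SS (M + 1) q) ^ 2 := by nlinarith [h3, h4]

private lemma SS_identity (q : ℝ) (n : ℕ) :
    SS (2 * n + 1) q * SS (2 * n + 3) q = SS (2 * n + 2) q ^ 2 - q ^ (2 * n + 1) := by
  have h1 : SS (2 * n + 2) q = SS (2 * n + 1) q + q ^ (2 * n + 1) := by
    unfold SS
    rw [show 2 * n + 2 = (2 * n + 1) + 1 by omega, Finset.sum_range_succ]
  have h2 : SS (2 * n + 3) q = SS (2 * n + 2) q + q ^ (2 * n + 2) := by
    unfold SS
    rw [show 2 * n + 3 = (2 * n + 2) + 1 by omega, Finset.sum_range_succ]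
  have h3 : SS (2 * n + 2) q * (q - 1) = q ^ (2 * n + 2) - 1 := geom_sum_mul q (2 * n + 2)
  rw [h1] at h3
  rw [h2, h1]
  linear_combination q ^ (2 * n + 1) * h3

private lemma WW_pos (n : ℕ) : 0 < WW n := by unfold WW; positivity

private lemma ll_bounds {q : ℝ} (hq0 : 0 < q) (hq1 : q < 1) (n : ℕ) :
    0 ≤ ll n q ∧ ll n q ≤ 1 / ((2 * (n : ℝ) + 1) * (2 * (n : ℝ) + 3)) := by
  have hs1 : 0 < SS (2 * n + 1) q := SS_pos hq0 (by omega)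
  have hs2 : 0 < SS (2 * n + 2) q := SS_pos hq0 (by omega)
  have hs3 : 0 < SS (2 * n + 3) q := SS_pos hq0 (by omega)
  have hden : 0 < SS (2 * n + 1) q * SS (2 * n + 3) q := mul_pos hs1 hs3
  have hid := SS_identity q n
  have hcs := cs_ineq hq0 (2 * n + 1)
  rw [show 2 * n + 1 + 1 = 2 * n + 2 by omega] at hcs
  push_cast at hcs
  have hqpow : 0 < q ^ (2 * n + 1) := pow_pos hq0 _
  have ha1 : 1 ≤ SS (2 * n + 2) q ^ 2 / (SS (2 * n + 1) q * SS (2 * n + 3) q) := by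
    rw [le_div_iff₀ hden]
    nlinarith
  have haW : SS (2 * n + 2) q ^ 2 / (SS (2 * n + 1) q * SS (2 * n + 3) q) ≤ WW n := by
    unfold WW
    rw [div_le_div_iff₀ hden (by positivity)]
    nlinarith
  constructor
  · exact Real.log_nonneg ha1
  · have hlog1 : ll n q ≤ Real.log (WW n) :=
      Real.log_le_log (by positivity) haW
    have hlog2 : Real.log (WW n) ≤ WW n - 1 := Real.log_le_sub_one_of_pos (WW_pos n)
    have hW1 : WW n - 1 = 1 / ((2 * (n : ℝ) + 1) * (2 * (n : ℝ) + 3)) := by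
      unfold WW
      field_simp
      ring
    linarith

private lemma ll_tendsto (n : ℕ) :
    Tendsto (fun q : ℝ => ll n q) (nhdsWithin 1 (Set.Ioo 0 1)) (nhds (Real.log (WW n))) := by
  have hden_ne : SS (2 * n + 1) 1 * SS (2 * n + 3) 1 ≠ 0 := by
    rw [SS_one, SS_one]; positivity
  have hcont : Tendsto
      (fun q : ℝ => (SS (2 * n + 2) q) ^ 2 / (SS (2 * n + 1) q * SS (2 * n + 3) q))
      (nhds 1) (nhds (WW n)) := by
    have h := Tendsto.div (((SS_continuous (2 * n + 2)).pow 2).tendsto 1)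
      (((SS_continuous (2 * n + 1)).mul (SS_continuous (2 * n + 3))).tendsto 1) hden_ne
    have hval : (SS (2 * n + 2) 1) ^ 2 / (SS (2 * n + 1) 1 * SS (2 * n + 3) 1) = WW n := by
      rw [SS_one, SS_one, SS_one]
      unfold WW
      push_cast
      ring
    rw [← hval]; exact h
  have hW := WW_pos n
  have hlog : Tendsto (fun q : ℝ => ll n q) (nhds 1) (nhds (Real.log (WW n))) :=
    (Real.continuousAt_log hW.ne').tendsto.comp hcont
  exact hlog.mono_left nhdsWithin_le_nhds

private lemma summable_bound :
    Summable (fun n : ℕ => 1 / ((2 * (n : ℝ) + 1) * (2 * (n : ℝ) + 3))) := by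
  have h1 : Summable (fun n : ℕ => 1 / ((n : ℝ) + 1) ^ 2) := by
    have h0 : Summable (fun n : ℕ => 1 / (n : ℝ) ^ 2) :=
      Real.summable_one_div_nat_pow.2 (by norm_num)
    have := (summable_nat_add_iff (f := fun n : ℕ => 1 / (n : ℝ) ^ 2) 1).2 h0
    simpa using this
  apply h1.of_nonneg_of_le (fun n => by positivity)
  intro n
  rw [div_le_div_iff₀ (by positivity) (by positivity)]
  nlinarith [sq_nonneg ((n : ℝ))]

private lemma tsum_log_WW : ∑' n : ℕ, Real.log (WW n) = Real.log (π / 2) := by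
  have hsumm : Summable fun n : ℕ => Real.log (WW n) := by
    apply summable_bound.of_nonneg_of_le
    · intro n
      apply Real.log_nonneg
      unfold WW
      rw [le_div_iff₀ (by positivity)]
      nlinarith [sq_nonneg ((n : ℝ))]
    · intro n
      have := Real.log_le_sub_one_of_pos (WW_pos n)
      have hW1 : WW n - 1 = 1 / ((2 * (n : ℝ) + 1) * (2 * (n : ℝ) + 3)) := by
        unfold WW; field_simp; ring
      linarith
  have h1 : Tendsto (fun k => ∑ i ∈ Finset.range k, Real.log (WW i)) atTop
      (nhds (∑' n : ℕ, Real.log (WW n))) := hsumm.hasSum.tendsto_sum_nat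
  have h2 : Tendsto (fun k => ∑ i ∈ Finset.range k, Real.log (WW i)) atTop
      (nhds (Real.log (π / 2))) := by
    have hterm : ∀ i : ℕ, ((2 : ℝ) * i + 2) / (2 * i + 1) * ((2 * i + 2) / (2 * i + 3))
        = WW i := by
      intro i
      unfold WW
      rw [div_mul_div_comm]
      ring_nf
    have hprod : ∀ k, ∑ i ∈ Finset.range k, Real.log (WW i)
        = Real.log (∏ i ∈ Finset.range k,
            ((2 : ℝ) * i + 2) / (2 * i + 1) * ((2 * i + 2) / (2 * i + 3))) := by
      intro k
      rw [Real.log_prod]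
      · exact Finset.sum_congr rfl fun i _ => by rw [hterm i]
      · intro i _
        rw [hterm i]
        exact (WW_pos i).ne'
    have hcomp : Tendsto (fun k => Real.log (∏ i ∈ Finset.range k,
        ((2 : ℝ) * i + 2) / (2 * i + 1) * ((2 * i + 2) / (2 * i + 3)))) atTop
        (nhds (Real.log (π / 2))) :=
      (Real.continuousAt_log (by positivity)).tendsto.comp Real.tendsto_prod_pi_div_two
    exact hcomp.congr fun k => (hprod k).symm
  exact tendsto_nhds_unique h1 h2

/-- The main identity: for `q ∈ (0,1)`,
`(1-q) ∏ (1-q^{2n+2})^4/(1-q^{n+1})^2 = exp (∑ ll n q)`. -/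
private lemma main_identity {q : ℝ} (hq0 : 0 < q) (hq1 : q < 1) :
    (1 - q) * ∏' n : ℕ, (1 - q ^ (2 * (n + 1))) ^ 4 / (1 - q ^ (n + 1)) ^ 2
      = Real.exp (∑' n : ℕ, ll n q) := by
  have hq' : 0 ≤ q := hq0.le
  have h1q : (0 : ℝ) < 1 - q := by linarith
  have hpow : ∀ m : ℕ, 0 < 1 - q ^ (m + 1) := by
    intro m
    have : q ^ (m + 1) < 1 := pow_lt_one₀ hq' hq1 (Nat.succ_ne_zero m)
    linarith
  set c : ℕ → ℝ := fun m => Real.log (1 - q ^ (m + 1)) with hc_def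
  -- summability of c
  have hc : Summable c := by
    have hgeo : Summable fun m : ℕ => q ^ (m + 1) / (1 - q) := by
      have h0 : Summable fun m : ℕ => q ^ m := summable_geometric_of_lt_one hq' hq1
      exact ((summable_nat_add_iff (f := fun m : ℕ => q ^ m) 1).2 h0).div_const _
    apply Summable.of_norm_bounded hgeo
    intro m
    have hx : 0 < 1 - q ^ (m + 1) := hpow m
    have hxle : q ^ (m + 1) ≤ q := by
      calc q ^ (m + 1) ≤ q ^ 1 := pow_le_pow_of_le_one hq' hq1.le (by omega)
        _ = q := pow_one q
    have hcm : c m ≤ 0 := Real.log_nonpos (by positivity) (by nlinarith [pow_pos hq0 (m+1)])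
    rw [Real.norm_eq_abs, abs_of_nonpos hcm]
    have h5 : Real.log ((1 - q ^ (m + 1))⁻¹) ≤ (1 - q ^ (m + 1))⁻¹ - 1 :=
      Real.log_le_sub_one_of_pos (by positivity)
    have h6 : -c m = Real.log ((1 - q ^ (m + 1))⁻¹) := by
      rw [Real.log_inv]
    have h7 : (1 - q ^ (m + 1))⁻¹ - 1 = q ^ (m + 1) / (1 - q ^ (m + 1)) := by
      field_simp
      ring
    have h8 : q ^ (m + 1) / (1 - q ^ (m + 1)) ≤ q ^ (m + 1) / (1 - q) := by
      apply div_le_div_of_nonneg_left (by positivity) h1q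
      linarith
    linarith
  have hco : Summable fun m => c (2 * m + 1) :=
    hc.comp_injective fun a b h => by omega
  have hce : Summable fun m => c (2 * m) :=
    hc.comp_injective fun a b h => by omega
  have hce2 : Summable fun m => c (2 * (m + 1)) :=
    hc.comp_injective fun a b h => by omega
  set A := ∑' m, c (2 * m + 1) with hA
  set E := ∑' m, c (2 * m) with hE
  set B := ∑' m, c m with hB
  set E2 := ∑' m, c (2 * (m + 1)) with hE2
  have hEA : E + A = B := tsum_even_add_odd hce hco
  have hEsplit : E = c 0 + E2 := hce.tsum_eq_zero_add
  -- the product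
  have hsum4 : HasSum (fun n => 4 * c (2 * n + 1) - 2 * c n) (4 * A - 2 * B) :=
    (hco.hasSum.mul_left 4).sub (hc.hasSum.mul_left 2)
  have hfun : (fun n => Real.exp (4 * c (2 * n + 1) - 2 * c n))
      = fun n => (1 - q ^ (2 * (n + 1))) ^ 4 / (1 - q ^ (n + 1)) ^ 2 := by
    funext n
    rw [Real.exp_sub,
      show (4 : ℝ) * c (2 * n + 1) = ((4 : ℕ) : ℝ) * c (2 * n + 1) by norm_num,
      show (2 : ℝ) * c n = ((2 : ℕ) : ℝ) * c n by norm_num,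
      Real.exp_nat_mul, Real.exp_nat_mul]
    simp only [hc_def]
    rw [Real.exp_log (hpow (2 * n + 1)), Real.exp_log (hpow n),
      show 2 * n + 1 + 1 = 2 * (n + 1) by omega]
  have hprod : HasProd (fun n => (1 - q ^ (2 * (n + 1))) ^ 4 / (1 - q ^ (n + 1)) ^ 2)
      (Real.exp (4 * A - 2 * B)) := by
    have := hsum4.rexp
    rwa [Function.comp_def, hfun] at this
  -- ll in terms of c
  have hll : ∀ n, ll n q = 2 * c (2 * n + 1) - c (2 * n) - c (2 * (n + 1)) := by
    intro n
    have hSform : ∀ m : ℕ, SS m q = (1 - q ^ m) / (1 - q) := by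
      intro m
      rw [eq_div_iff h1q.ne', mul_comm, SS_mul_one_sub]
    unfold ll
    rw [hSform, hSform, hSform]
    have e1 : ((1 - q ^ (2 * n + 2)) / (1 - q)) ^ 2
        / ((1 - q ^ (2 * n + 1)) / (1 - q) * ((1 - q ^ (2 * n + 3)) / (1 - q)))
        = (1 - q ^ (2 * n + 2)) ^ 2 / ((1 - q ^ (2 * n + 1)) * (1 - q ^ (2 * n + 3))) := by
      have h21 : (0:ℝ) < 1 - q ^ (2 * n + 1) := by
        have := hpow (2 * n); rwa [show 2 * n + 1 = 2 * n + 1 from rfl]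
      have h23 : (0:ℝ) < 1 - q ^ (2 * n + 3) := by
        have := hpow (2 * n + 2); rwa [show 2 * n + 2 + 1 = 2 * n + 3 by omega] at this
      field_simp
    rw [e1]
    have h21 : (0:ℝ) < 1 - q ^ (2 * n + 1) := hpow (2 * n)
    have h22 : (0:ℝ) < 1 - q ^ (2 * n + 2) := by
      have := hpow (2 * n + 1); rwa [show 2 * n + 1 + 1 = 2 * n + 2 by omega] at this
    have h23 : (0:ℝ) < 1 - q ^ (2 * n + 3) := by
      have := hpow (2 * n + 2); rwa [show 2 * n + 2 + 1 = 2 * n + 3 by omega] at this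
    rw [Real.log_div (by positivity) (by positivity),
      Real.log_mul h21.ne' h23.ne', Real.log_pow]
    simp only [hc_def]
    rw [show 2 * n + 1 + 1 = 2 * n + 2 by omega,
      show 2 * n + 0 + 1 = 2 * n + 1 by omega,
      show 2 * (n + 1) + 1 = 2 * n + 3 by omega]
    push_cast
    ring
  have hllsum : HasSum (fun n => ll n q) (2 * A - E - E2) := by
    have h := ((hco.hasSum.mul_left 2).sub hce.hasSum).sub hce2.hasSum
    exact HasSum.congr_fun h hll
  rw [hprod.tprod_eq, hllsum.tsum_eq]
  have hc0 : 1 - q = Real.exp (c 0) := by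
    simp only [hc_def]
    rw [pow_one, Real.exp_log h1q]
  rw [hc0, ← Real.exp_add]
  congr 1
  linarith

/-- An equivalent form of Wallis's product formula:
lim_{q→1⁻} (1-q) ∏_{n≥1} (1-q^{2n})^4/(1-q^n)^2 = π/2. -/
theorem wallis_equivalent :
    Tendsto (fun q : ℝ => (1 - q) * ∏' n : ℕ, (1 - q ^ (2 * (n + 1))) ^ 4 / (1 - q ^ (n + 1)) ^ 2)
      (nhdsWithin 1 (Set.Ioo 0 1)) (nhds (π / 2)) := by
  have hL : Tendsto (fun q : ℝ => ∑' n : ℕ, ll n q)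
      (nhdsWithin 1 (Set.Ioo 0 1)) (nhds (∑' n : ℕ, Real.log (WW n))) := by
    apply tendsto_tsum_of_dominated_convergence summable_bound ll_tendsto ?_
    · filter_upwards [self_mem_nhdsWithin] with q hq
      intro n
      obtain ⟨h1, h2⟩ := ll_bounds hq.1 hq.2 n
      rw [Real.norm_eq_abs, abs_of_nonneg h1]
      exact h2
  have hexp : Tendsto (fun q : ℝ => Real.exp (∑' n : ℕ, ll n q))
      (nhdsWithin 1 (Set.Ioo 0 1)) (nhds (π / 2)) := by
    have := (Real.continuous_exp.continuousAt).tendsto.comp hL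
    rwa [tsum_log_WW, Real.exp_log (by positivity)] at this
  apply hexp.congr'
  filter_upwards [self_mem_nhdsWithin] with q hq
  exact (main_identity hq.1 hq.2).symm
end

section
/- For every even integer k ≥ 2, lim_{q → 1⁻} (1 - q)^{2k+1} · ∑_{n=1}^∞ χ_{-4}(n) ∑_{m=1}^∞ m^{2k} (q^{nm} - 2^{2k} q^{2nm}) = (2k)! · β(2k+1) / 2, where q ranges over real numbers in (0,1). -/
open Real Filter

/-- The nontrivial Dirichlet character modulo 4. -/
def chi4 (n : ℕ) : ℤ :=
  if n % 4 = 1 then 1 else if n % 4 = 3 then -1 else 0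

noncomputable def Li (p : ℕ) (x : ℝ) : ℝ := ∑' m : ℕ, ((m : ℝ) + 1) ^ p * x ^ (m + 1)

lemma summable_Li (p : ℕ) {x : ℝ} (hx0 : 0 ≤ x) (hx1 : x < 1) :
    Summable (fun m : ℕ => ((m : ℝ) + 1) ^ p * x ^ (m + 1)) := by
  have hx : ‖x‖ < 1 := by rwa [Real.norm_eq_abs, abs_of_nonneg hx0]
  have h := summable_pow_mul_geometric_of_norm_lt_one (R := ℝ) p hx
  have h2 := (summable_nat_add_iff 1).2 h
  refine h2.congr fun m => ?_
  push_cast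
  ring

lemma Li_nonneg (p : ℕ) {x : ℝ} (hx : 0 ≤ x) : 0 ≤ Li p x :=
  tsum_nonneg fun m => by positivity

lemma hasSum_upper (p : ℕ) {x : ℝ} (hx0 : 0 ≤ x) (hx1 : x < 1) :
    HasSum (fun m : ℕ => ((p.factorial : ℝ) * ((m + p).choose p)) * x ^ (m + 1))
      ((p.factorial : ℝ) * x * (1 / (1 - x) ^ (p + 1))) := by
  have hx : ‖x‖ < 1 := by rwa [Real.norm_eq_abs, abs_of_nonneg hx0]
  have hs := hasSum_choose_mul_geometric_of_norm_lt_one (𝕜 := ℝ) p hx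
  have h2 := hs.mul_left ((p.factorial : ℝ) * x)
  have : (fun m : ℕ => ((p.factorial : ℝ) * x) * ((((m + p).choose p : ℕ) : ℝ) * x ^ m)) =
      fun m : ℕ => ((p.factorial : ℝ) * ((m + p).choose p)) * x ^ (m + 1) := by
    funext m; ring
  rwa [this] at h2

lemma hasSum_lower (p : ℕ) {x : ℝ} (hx0 : 0 ≤ x) (hx1 : x < 1) :
    HasSum (fun m : ℕ => ((p.factorial : ℝ) * (m.choose p)) * x ^ (m + 1))
      ((p.factorial : ℝ) * x ^ (p + 1) * (1 / (1 - x) ^ (p + 1))) := by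
  have hx : ‖x‖ < 1 := by rwa [Real.norm_eq_abs, abs_of_nonneg hx0]
  have hs := hasSum_choose_mul_geometric_of_norm_lt_one (𝕜 := ℝ) p hx
  have h2 := hs.mul_left ((p.factorial : ℝ) * x ^ (p + 1))
  have hinj : Function.Injective (fun m : ℕ => m + p) := add_left_injective p
  have h3 : (fun m : ℕ => ((p.factorial : ℝ) * x ^ (p + 1)) * ((((m + p).choose p : ℕ) : ℝ) * x ^ m)) =
      (fun n : ℕ => ((p.factorial : ℝ) * (n.choose p)) * x ^ (n + 1)) ∘ (fun m : ℕ => m + p) := by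
    funext m
    simp only [Function.comp_apply]
    ring
  rw [h3] at h2
  exact (hinj.hasSum_iff (fun n hn => by
    have hnp : n < p := by
      by_contra hc
      exact hn ⟨n - p, by simp only []; omega⟩
    simp [Nat.choose_eq_zero_of_lt hnp])).1 h2

lemma Li_upper (p : ℕ) {x : ℝ} (hx0 : 0 ≤ x) (hx1 : x < 1) :
    (1 - x) ^ (p + 1) * Li p x ≤ (p.factorial : ℝ) * x := by
  have hx' : (0:ℝ) < 1 - x := by linarith
  have H := hasSum_upper p hx0 hx1
  have hle : Li p x ≤ (p.factorial : ℝ) * x * (1 / (1 - x) ^ (p + 1)) := by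
    rw [Li, ← H.tsum_eq]
    refine Summable.tsum_le_tsum (fun m => ?_) (summable_Li p hx0 hx1) H.summable
    have hnat : (m + 1) ^ p ≤ p.factorial * ((m + p).choose p) := by
      calc (m + 1) ^ p ≤ (m + 1).ascFactorial p := Nat.pow_succ_le_ascFactorial (m+1) p
        _ = p.factorial * ((m + p).choose p) := Nat.ascFactorial_eq_factorial_mul_choose m p
    have hcast : ((m : ℝ) + 1) ^ p ≤ (p.factorial : ℝ) * ((m + p).choose p) := by
      exact_mod_cast hnat
    exact mul_le_mul_of_nonneg_right hcast (by positivity)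
  calc (1 - x) ^ (p + 1) * Li p x
      ≤ (1 - x) ^ (p + 1) * ((p.factorial : ℝ) * x * (1 / (1 - x) ^ (p + 1))) :=
        mul_le_mul_of_nonneg_left hle (by positivity)
    _ = (p.factorial : ℝ) * x := by field_simp

lemma Li_lower (p : ℕ) {x : ℝ} (hx0 : 0 ≤ x) (hx1 : x < 1) :
    (p.factorial : ℝ) * x ^ (p + 1) ≤ (1 - x) ^ (p + 1) * Li p x := by
  have hx' : (0:ℝ) < 1 - x := by linarith
  have H := hasSum_lower p hx0 hx1
  have hle : (p.factorial : ℝ) * x ^ (p + 1) * (1 / (1 - x) ^ (p + 1)) ≤ Li p x := by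
    rw [Li, ← H.tsum_eq]
    refine Summable.tsum_le_tsum (fun m => ?_) H.summable (summable_Li p hx0 hx1)
    have hnat : p.factorial * (m.choose p) ≤ (m + 1) ^ p := by
      calc p.factorial * (m.choose p) = m.descFactorial p :=
          (Nat.descFactorial_eq_factorial_mul_choose m p).symm
        _ ≤ m ^ p := Nat.descFactorial_le_pow m p
        _ ≤ (m + 1) ^ p := Nat.pow_le_pow_left (by omega) p
    have hcast : (p.factorial : ℝ) * (m.choose p) ≤ ((m : ℝ) + 1) ^ p := by
      exact_mod_cast hnat
    exact mul_le_mul_of_nonneg_right hcast (by positivity)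
  calc (p.factorial : ℝ) * x ^ (p + 1)
      = (1 - x) ^ (p + 1) * ((p.factorial : ℝ) * x ^ (p + 1) * (1 / (1 - x) ^ (p + 1))) := by
        field_simp
    _ ≤ (1 - x) ^ (p + 1) * Li p x := mul_le_mul_of_nonneg_left hle (by positivity)

lemma tendsto_G (p : ℕ) :
    Tendsto (fun x : ℝ => (1 - x) ^ (p + 1) * Li p x) (nhdsWithin 1 (Set.Ioo 0 1))
      (nhds (p.factorial : ℝ)) := by
  have hlow : Tendsto (fun x : ℝ => (p.factorial : ℝ) * x ^ (p + 1))
      (nhdsWithin 1 (Set.Ioo 0 1)) (nhds (p.factorial : ℝ)) := by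
    have := (((tendsto_id (x := nhds (1:ℝ))).pow (p + 1)).const_mul
      ((p.factorial : ℝ))).mono_left (nhdsWithin_le_nhds (s := Set.Ioo 0 1))
    simpa [Function.id_def] using this
  have hup : Tendsto (fun x : ℝ => (p.factorial : ℝ) * x)
      (nhdsWithin 1 (Set.Ioo 0 1)) (nhds (p.factorial : ℝ)) := by
    have := ((tendsto_id (x := nhds (1:ℝ))).const_mul
      ((p.factorial : ℝ))).mono_left (nhdsWithin_le_nhds (s := Set.Ioo 0 1))
    simpa [Function.id_def] using this
  refine tendsto_of_tendsto_of_tendsto_of_le_of_le' hlow hup ?_ ?_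
  · filter_upwards [self_mem_nhdsWithin] with x hx
    exact Li_lower p hx.1.le hx.2
  · filter_upwards [self_mem_nhdsWithin] with x hx
    exact Li_upper p hx.1.le hx.2

lemma tendsto_B (p N : ℕ) (hN : 0 < N) :
    Tendsto (fun q : ℝ => (1 - q) ^ (p + 1) * Li p (q ^ N)) (nhdsWithin 1 (Set.Ioo 0 1))
      (nhds ((p.factorial : ℝ) / (N : ℝ) ^ (p + 1))) := by
  have hNR : (0:ℝ) < (N : ℝ) := by exact_mod_cast hN
  have hpow : Tendsto (fun q : ℝ => q ^ N) (nhdsWithin 1 (Set.Ioo 0 1))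
      (nhdsWithin 1 (Set.Ioo 0 1)) := by
    rw [tendsto_nhdsWithin_iff]
    constructor
    · have := ((tendsto_id (x := nhds (1:ℝ))).pow N).mono_left
        (nhdsWithin_le_nhds (s := Set.Ioo 0 1))
      simpa [Function.id_def] using this
    · filter_upwards [self_mem_nhdsWithin] with q hq
      exact ⟨pow_pos hq.1 N, pow_lt_one₀ hq.1.le hq.2 hN.ne'⟩
  have h2 := (tendsto_G p).comp hpow
  have hc : Tendsto (fun q : ℝ => ((∑ i ∈ Finset.range N, q ^ i)⁻¹) ^ (p + 1))
      (nhdsWithin 1 (Set.Ioo 0 1)) (nhds ((((N : ℝ))⁻¹) ^ (p + 1))) := by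
    have hsum : Tendsto (fun q : ℝ => ∑ i ∈ Finset.range N, q ^ i) (nhds 1) (nhds (N : ℝ)) := by
      have := (continuous_finset_sum (Finset.range N)
        (fun i _ => (continuous_pow i : Continuous fun q : ℝ => q ^ i))).tendsto (1 : ℝ)
      simpa using this
    exact ((hsum.mono_left nhdsWithin_le_nhds).inv₀ hNR.ne').pow (p + 1)
  have h4 := hc.mul h2
  have heq : ∀ᶠ q in nhdsWithin 1 (Set.Ioo (0:ℝ) 1),
      ((∑ i ∈ Finset.range N, q ^ i)⁻¹) ^ (p + 1) *
        ((fun x : ℝ => (1 - x) ^ (p + 1) * Li p x) ∘ fun q : ℝ => q ^ N) q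
        = (1 - q) ^ (p + 1) * Li p (q ^ N) := by
    filter_upwards [self_mem_nhdsWithin] with q hq
    have hS : (0:ℝ) < ∑ i ∈ Finset.range N, q ^ i :=
      Finset.sum_pos (fun i _ => pow_pos hq.1 i) (by simp [hN.ne'])
    have hgeom : (1 - q) * (∑ i ∈ Finset.range N, q ^ i) = 1 - q ^ N := by
      have := geom_sum_mul q N
      linear_combination -this
    simp only [Function.comp_apply]
    rw [← hgeom, mul_pow]
    linear_combination ((1 - q) ^ (p + 1) * Li p (q ^ N)) * (inv_mul_cancel₀ (pow_ne_zero (p + 1) hS.ne'))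
  have hval : (((N : ℝ))⁻¹) ^ (p + 1) * (p.factorial : ℝ)
      = (p.factorial : ℝ) / (N : ℝ) ^ (p + 1) := by
    rw [inv_pow, div_eq_inv_mul]
  rw [← hval]
  exact h4.congr' heq

lemma key_bound (p N : ℕ) (hN : 0 < N) {q : ℝ} (hq : q ∈ Set.Ioo (0:ℝ) 1) :
    (1 - q) ^ (p + 1) * Li p (q ^ N)
      ≤ (p.factorial : ℝ) * ((p : ℝ) + 1) ^ (p + 1) / (N : ℝ) ^ (p + 1) := by
  obtain ⟨hq0, hq1⟩ := hq
  have hNR : (0:ℝ) < (N : ℝ) := by exact_mod_cast hN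
  set t : ℝ := 1 - q with ht_def
  have ht : 0 < t := by simp only [ht_def]; linarith
  set s : ℝ := (N : ℝ) * t with hs_def
  have hs : 0 < s := mul_pos hNR ht
  have hA : (0:ℝ) < 1 + s := by linarith
  have hqN0 : 0 < q ^ N := pow_pos hq0 N
  have hqN1 : q ^ N < 1 := pow_lt_one₀ hq0.le hq1 hN.ne'
  -- Bernoulli: q^N * (1 + s) ≤ 1
  have h1 : q ^ N * (1 + s) ≤ 1 := by
    have ha : (1:ℝ) + (N : ℕ) * (t / q) ≤ (1 + t / q) ^ N :=
      one_add_mul_le_pow (le_trans (by norm_num) (div_nonneg ht.le hq0.le) : (-2:ℝ) ≤ t / q) N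
    have hq1t : q * (1 + t / q) = 1 := by field_simp; linarith
    have h1' : q ^ N * (1 + t / q) ^ N = 1 := by
      rw [← mul_pow, hq1t, one_pow]
    have hts : 1 + s ≤ 1 + (N : ℝ) * (t / q) := by
      have : t ≤ t / q := by rw [le_div_iff₀ hq0]; nlinarith
      simp only [hs_def]
      nlinarith
    calc q ^ N * (1 + s) ≤ q ^ N * (1 + (N : ℝ) * (t / q)) := by nlinarith
      _ ≤ q ^ N * (1 + t / q) ^ N := by nlinarith
      _ = 1 := h1'
  -- 1 - q^N ≥ s/(1+s)
  have h2 : s / (1 + s) ≤ 1 - q ^ N := by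
    rw [div_le_iff₀ hA]
    nlinarith
  have hsA : 0 < s / (1 + s) := by positivity
  -- Li bound
  have hLi : (1 - q ^ N) ^ (p + 1) * Li p (q ^ N) ≤ (p.factorial : ℝ) * q ^ N :=
    Li_upper p hqN0.le hqN1
  have hLinn : 0 ≤ Li p (q ^ N) := Li_nonneg p hqN0.le
  have h3 : (s / (1 + s)) ^ (p + 1) * Li p (q ^ N) ≤ (p.factorial : ℝ) * q ^ N := by
    calc (s / (1 + s)) ^ (p + 1) * Li p (q ^ N)
        ≤ (1 - q ^ N) ^ (p + 1) * Li p (q ^ N) := by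
          apply mul_le_mul_of_nonneg_right _ hLinn
          exact pow_le_pow_left₀ hsA.le h2 (p + 1)
      _ ≤ (p.factorial : ℝ) * q ^ N := hLi
  -- so Li ≤ p! q^N ((1+s)/s)^(p+1)
  have h4 : Li p (q ^ N) ≤ (p.factorial : ℝ) * q ^ N * ((1 + s) / s) ^ (p + 1) := by
    have hpos : (0:ℝ) < (s / (1 + s)) ^ (p + 1) := by positivity
    rw [← mul_le_mul_iff_right₀ hpos]
    calc (s / (1 + s)) ^ (p + 1) * Li p (q ^ N) ≤ (p.factorial : ℝ) * q ^ N := h3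
      _ = (s / (1 + s)) ^ (p + 1) * ((p.factorial : ℝ) * q ^ N * ((1 + s) / s) ^ (p + 1)) := by
          rw [div_pow, div_pow]
          field_simp
  -- exp bounds
  have hexp1 : q ^ N ≤ Real.exp (-s) := by
    have : q ≤ Real.exp (-t) := by
      have := Real.add_one_le_exp (-t)
      linarith
    calc q ^ N ≤ (Real.exp (-t)) ^ N := pow_le_pow_left₀ hq0.le this N
      _ = Real.exp (-s) := by
        rw [← Real.exp_nat_mul]
        congr 1
        simp only [hs_def]
        ring
  have hexp2 : (1 + s) ^ (p + 1) ≤ ((p : ℝ) + 1) ^ (p + 1) * Real.exp s := by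
    have hstep : 1 + s ≤ ((p : ℝ) + 1) * Real.exp (s / ((p : ℝ) + 1)) := by
      have h5 := Real.add_one_le_exp (s / ((p : ℝ) + 1))
      have hp1 : (0:ℝ) < (p : ℝ) + 1 := by positivity
      have : ((p : ℝ) + 1) * (s / ((p : ℝ) + 1) + 1) ≤ ((p : ℝ) + 1) * Real.exp (s / ((p : ℝ) + 1)) := by
        nlinarith
      calc (1:ℝ) + s ≤ ((p : ℝ) + 1) * (s / ((p : ℝ) + 1) + 1) := by
            rw [mul_add, mul_div_cancel₀ _ hp1.ne']; nlinarith
        _ ≤ _ := this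
    calc (1 + s) ^ (p + 1) ≤ (((p : ℝ) + 1) * Real.exp (s / ((p : ℝ) + 1))) ^ (p + 1) :=
        pow_le_pow_left₀ (by linarith) hstep (p + 1)
      _ = ((p : ℝ) + 1) ^ (p + 1) * Real.exp s := by
        rw [mul_pow, ← Real.exp_nat_mul]
        congr 2
        push_cast
        field_simp
  -- combine
  have h6 : q ^ N * (1 + s) ^ (p + 1) ≤ ((p : ℝ) + 1) ^ (p + 1) := by
    calc q ^ N * (1 + s) ^ (p + 1)
        ≤ Real.exp (-s) * (((p : ℝ) + 1) ^ (p + 1) * Real.exp s) := by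
          apply mul_le_mul hexp1 hexp2 (by positivity) (by positivity)
      _ = ((p : ℝ) + 1) ^ (p + 1) := by
          rw [← mul_assoc, mul_comm (Real.exp (-s)), mul_assoc, ← Real.exp_add]
          simp
  calc (1 - q) ^ (p + 1) * Li p (q ^ N)
      ≤ t ^ (p + 1) * ((p.factorial : ℝ) * q ^ N * ((1 + s) / s) ^ (p + 1)) := by
        apply mul_le_mul_of_nonneg_left h4 (by positivity)
    _ = (p.factorial : ℝ) * (q ^ N * (1 + s) ^ (p + 1)) / (N : ℝ) ^ (p + 1) := by
        rw [div_pow]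
        rw [hs_def, mul_pow]
        field_simp
    _ ≤ (p.factorial : ℝ) * ((p : ℝ) + 1) ^ (p + 1) / (N : ℝ) ^ (p + 1) := by
        apply div_le_div_of_nonneg_right _ (by positivity)  -- maybe wrong name
        apply mul_le_mul_of_nonneg_left h6 (by positivity)

lemma chi4_abs (n : ℕ) : |(chi4 n : ℝ)| ≤ 1 := by
  unfold chi4
  split_ifs <;> norm_num

lemma chi4_odd (j : ℕ) : chi4 (2 * j + 1) = (-1) ^ j := by
  rcases Nat.even_or_odd j with ⟨a, rfl⟩ | ⟨a, rfl⟩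
  · have h4 : (2 * (a + a) + 1) % 4 = 1 := by omega
    simp [chi4, h4, Even.neg_one_pow ⟨a, rfl⟩]
  · have h4 : (2 * (2 * a + 1) + 1) % 4 = 3 := by omega
    simp [chi4, h4, Odd.neg_one_pow ⟨a, rfl⟩]

lemma chi4_even (n : ℕ) (h : n % 2 = 0) : chi4 n = 0 := by
  have h1 : n % 4 ≠ 1 := by omega
  have h3 : n % 4 ≠ 3 := by omega
  simp [chi4, h1, h3]

lemma beta_reindex (P : ℕ) :
    ∑' n : ℕ, (chi4 (n + 1) : ℝ) / ((n : ℝ) + 1) ^ P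
      = ∑' j : ℕ, (-1 : ℝ) ^ j / (2 * (j : ℝ) + 1) ^ P := by
  have hinj : Function.Injective (fun j : ℕ => 2 * j) := fun a b h => by
    simp only [] at h; omega
  have hsupp : Function.support (fun n : ℕ => (chi4 (n + 1) : ℝ) / ((n : ℝ) + 1) ^ P)
      ⊆ Set.range (fun j : ℕ => 2 * j) := by
    intro n hn
    rcases Nat.even_or_odd n with ⟨a, rfl⟩ | ⟨a, rfl⟩
    · exact ⟨a, by simp only []; omega⟩
    · exfalso
      apply hn
      have : chi4 (2 * a + 1 + 1) = 0 := chi4_even _ (by omega)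
      simp [this]
  have := Function.Injective.tsum_eq hinj hsupp
  rw [← this]
  refine tsum_congr fun j => ?_
  show (chi4 (2 * j + 1) : ℝ) / ((2 * j : ℕ) + 1 : ℝ) ^ P = _
  rw [chi4_odd j]
  push_cast
  ring_nf

lemma bound_summable (p c : ℕ) (hp : 1 ≤ p) (C : ℝ) :
    Summable (fun n : ℕ => C / ((n : ℝ) + 1) ^ (p + 1)) := by
  have h := Real.summable_one_div_nat_pow.2 (show 2 ≤ p + 1 by omega)
  have h2 := (summable_nat_add_iff 1).2 h
  have h3 : Summable (fun n : ℕ => 1 / ((n : ℝ) + 1) ^ (p + 1)) := by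
    refine h2.congr fun n => ?_
    push_cast
    ring
  simpa [div_eq_mul_inv] using h3.mul_left C

/-- For even k ≥ 2, the Lambert series limit giving the beta value:
lim_{q→1⁻} (1-q)^{2k+1} ∑_{n≥1} χ₋₄(n) ∑_{m≥1} m^{2k}(q^{nm} - 2^{2k} q^{2nm})
  = (2k)! β(2k+1)/2. -/
theorem lambert_limit_even (k : ℕ) (hk : 2 ≤ k) (hke : Even k) :
    Tendsto
      (fun q : ℝ => (1 - q) ^ (2 * k + 1) *
        ∑' n : ℕ, (chi4 (n + 1) : ℝ) *
          ∑' m : ℕ, ((m : ℝ) + 1) ^ (2 * k) *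
            (q ^ ((n + 1) * (m + 1)) - 2 ^ (2 * k) * q ^ (2 * (n + 1) * (m + 1))))
      (nhdsWithin 1 (Set.Ioo 0 1))
      (nhds ((Nat.factorial (2 * k) : ℝ) *
        (∑' j : ℕ, (-1 : ℝ) ^ j / (2 * (j : ℝ) + 1) ^ (2 * k + 1)) / 2)) := by
  set F : ℝ := ((2 * k).factorial : ℝ) with hF
  set c : ℝ := (2 : ℝ) ^ (2 * k) with hc
  have hc0 : 0 ≤ c := by positivity
  set f : ℝ → ℕ → ℝ := fun q n => (chi4 (n + 1) : ℝ) *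
    ((1 - q) ^ (2 * k + 1) *
      (Li (2 * k) (q ^ (n + 1)) - c * Li (2 * k) (q ^ (2 * (n + 1))))) with hf
  set g : ℕ → ℝ := fun n => (chi4 (n + 1) : ℝ) *
    (F / ((n + 1 : ℕ) : ℝ) ^ (2 * k + 1) - c * (F / ((2 * (n + 1) : ℕ) : ℝ) ^ (2 * k + 1)))
    with hg
  set D : ℝ := F * (((2 * k : ℕ) : ℝ) + 1) ^ (2 * k + 1) with hD
  have hD0 : 0 ≤ D := by positivity
  -- pointwise limits
  have hpt : ∀ n : ℕ, Tendsto (fun q => f q n) (nhdsWithin 1 (Set.Ioo 0 1)) (nhds (g n)) := by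
    intro n
    have hB1 := tendsto_B (2 * k) (n + 1) n.succ_pos
    have hB2 := tendsto_B (2 * k) (2 * (n + 1)) (by omega)
    have h := (hB1.sub (hB2.const_mul c)).const_mul ((chi4 (n + 1) : ℝ))
    exact h.congr fun q => by simp only [hf]; ring
  -- domination
  have hbd : ∀ᶠ q in nhdsWithin 1 (Set.Ioo (0:ℝ) 1), ∀ n : ℕ,
      ‖f q n‖ ≤ (1 + c) * D / ((n : ℝ) + 1) ^ (2 * k + 1) := by
    filter_upwards [self_mem_nhdsWithin] with q hq
    intro n
    have hq0 : (0:ℝ) < q := hq.1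
    have hq1 : q < 1 := hq.2
    have h1q : (0:ℝ) ≤ 1 - q := by linarith
    have hL1 : 0 ≤ Li (2 * k) (q ^ (n + 1)) := Li_nonneg _ (by positivity)
    have hL2 : 0 ≤ Li (2 * k) (q ^ (2 * (n + 1))) := Li_nonneg _ (by positivity)
    have hk1 := key_bound (2 * k) (n + 1) n.succ_pos hq
    have hk2 := key_bound (2 * k) (2 * (n + 1)) (by omega) hq
    have hmono : D / ((2 * (n + 1) : ℕ) : ℝ) ^ (2 * k + 1)
        ≤ D / ((n + 1 : ℕ) : ℝ) ^ (2 * k + 1) := by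
      gcongr
      exact_mod_cast (by omega : n + 1 ≤ 2 * (n + 1))
    have habs : |Li (2 * k) (q ^ (n + 1)) - c * Li (2 * k) (q ^ (2 * (n + 1)))|
        ≤ Li (2 * k) (q ^ (n + 1)) + c * Li (2 * k) (q ^ (2 * (n + 1))) := by
      rw [abs_le]
      constructor <;> nlinarith
    have e1 : ‖f q n‖ = |(chi4 (n + 1) : ℝ)| * ((1 - q) ^ (2 * k + 1) *
        |Li (2 * k) (q ^ (n + 1)) - c * Li (2 * k) (q ^ (2 * (n + 1)))|) := by
      rw [hf]
      simp only []
      rw [Real.norm_eq_abs, abs_mul, abs_mul, abs_of_nonneg (pow_nonneg h1q _)]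
    rw [e1]
    have hcast : ((n + 1 : ℕ) : ℝ) = (n : ℝ) + 1 := by push_cast; ring
    calc |(chi4 (n + 1) : ℝ)| * ((1 - q) ^ (2 * k + 1) *
          |Li (2 * k) (q ^ (n + 1)) - c * Li (2 * k) (q ^ (2 * (n + 1)))|)
        ≤ 1 * ((1 - q) ^ (2 * k + 1) *
          (Li (2 * k) (q ^ (n + 1)) + c * Li (2 * k) (q ^ (2 * (n + 1))))) := by
          apply mul_le_mul (chi4_abs _)
            (mul_le_mul_of_nonneg_left habs (pow_nonneg h1q _))
            (by positivity) (by norm_num)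
      _ = (1 - q) ^ (2 * k + 1) * Li (2 * k) (q ^ (n + 1))
            + c * ((1 - q) ^ (2 * k + 1) * Li (2 * k) (q ^ (2 * (n + 1)))) := by ring
      _ ≤ D / ((n + 1 : ℕ) : ℝ) ^ (2 * k + 1)
            + c * (D / ((n + 1 : ℕ) : ℝ) ^ (2 * k + 1)) := by
          apply add_le_add hk1
          exact mul_le_mul_of_nonneg_left (hk2.trans hmono) hc0
      _ = (1 + c) * D / ((n : ℝ) + 1) ^ (2 * k + 1) := by
          rw [hcast]; ring
  -- summability of the bound
  have hsum : Summable (fun n : ℕ => (1 + c) * D / ((n : ℝ) + 1) ^ (2 * k + 1)) :=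
    bound_summable (2 * k) 0 (by omega) _
  have hmain := tendsto_tsum_of_dominated_convergence hsum hpt hbd
  -- value of the limit sum
  have hval : ∑' n : ℕ, g n = F * (∑' j : ℕ, (-1 : ℝ) ^ j / (2 * (j : ℝ) + 1) ^ (2 * k + 1)) / 2 := by
    have hgn : ∀ n : ℕ, g n = (F / 2) * ((chi4 (n + 1) : ℝ) / ((n : ℝ) + 1) ^ (2 * k + 1)) := by
      intro n
      have h1 : ((n + 1 : ℕ) : ℝ) = (n : ℝ) + 1 := by push_cast; ring
      have h2 : ((2 * (n + 1) : ℕ) : ℝ) = 2 * ((n : ℝ) + 1) := by push_cast; ring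
      have hX : ((n : ℝ) + 1) ≠ 0 := by positivity
      have hF0 : (0:ℝ) ≤ F := by positivity
      rw [hg]
      simp only []
      rw [h1, h2, mul_pow, hc]
      have h2p : (2:ℝ) ^ (2 * k + 1) = 2 * 2 ^ (2 * k) := by ring
      rw [h2p]
      field_simp
      ring
    rw [tsum_congr hgn, tsum_mul_left, beta_reindex]
    ring
  rw [← hval] at *
  -- eventual equality of the two functions
  have heq : ∀ᶠ q in nhdsWithin 1 (Set.Ioo (0:ℝ) 1),
      (fun q => ∑' n : ℕ, f q n) q
        = (1 - q) ^ (2 * k + 1) *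
          ∑' n : ℕ, (chi4 (n + 1) : ℝ) *
            ∑' m : ℕ, ((m : ℝ) + 1) ^ (2 * k) *
              (q ^ ((n + 1) * (m + 1)) - 2 ^ (2 * k) * q ^ (2 * (n + 1) * (m + 1))) := by
    filter_upwards [self_mem_nhdsWithin] with q hq
    have hq0 : (0:ℝ) < q := hq.1
    have hq1 : q < 1 := hq.2
    rw [← tsum_mul_left]
    refine tsum_congr fun n => ?_
    have hx1a : (0:ℝ) ≤ q ^ (n + 1) := by positivity
    have hx1b : q ^ (n + 1) < 1 := pow_lt_one₀ hq0.le hq1 (Nat.succ_ne_zero n)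
    have hx2a : (0:ℝ) ≤ q ^ (2 * (n + 1)) := by positivity
    have hx2b : q ^ (2 * (n + 1)) < 1 := pow_lt_one₀ hq0.le hq1 (by omega)
    have S1 := summable_Li (2 * k) hx1a hx1b
    have S2 := summable_Li (2 * k) hx2a hx2b
    have hterm : ∀ m : ℕ, ((m : ℝ) + 1) ^ (2 * k) *
        (q ^ ((n + 1) * (m + 1)) - 2 ^ (2 * k) * q ^ (2 * (n + 1) * (m + 1)))
        = ((m : ℝ) + 1) ^ (2 * k) * (q ^ (n + 1)) ^ (m + 1)
          - c * (((m : ℝ) + 1) ^ (2 * k) * (q ^ (2 * (n + 1))) ^ (m + 1)) := by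
      intro m
      rw [pow_mul q (n + 1) (m + 1), pow_mul q (2 * (n + 1)) (m + 1), hc]
      ring
    have hinner : (∑' m : ℕ, ((m : ℝ) + 1) ^ (2 * k) *
        (q ^ ((n + 1) * (m + 1)) - 2 ^ (2 * k) * q ^ (2 * (n + 1) * (m + 1))))
        = Li (2 * k) (q ^ (n + 1)) - c * Li (2 * k) (q ^ (2 * (n + 1))) := by
      rw [tsum_congr hterm, Summable.tsum_sub S1 (S2.mul_left c), tsum_mul_left]
      rfl
    rw [hinner, hf]
    ring
  exact hmain.congr' heq
end

section
/- For every complex number q with |q| < 1, (∑_{n=0}^∞ q^{n(n+1)/2}) · (∑_{n=0}^∞ q^{n(n+1)}) · ∏_{n=1}^∞ (1 - q^n) = ∏_{n=1}^∞ (1 - q^{4n})^2 · ∏_{n=1}^∞ (1 - q^{2n}). (Equivalently, η(4τ)^2 = e^{3πiτ/4} η(τ) Ψ(τ) Ψ(2τ)/η(2τ), where Ψ(τ) = ∑_{n≥0} q^{n(n+1)/2} with q = e^{2πiτ}.) -/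
open Finset Filter Topology

noncomputable section PsiAux

/-- partial q-Pochhammer (q;q)_k -/
def qfac (q : ℂ) (k : ℕ) : ℂ := ∏ j ∈ Finset.range k, (1 - q ^ (j + 1))

/-- Gaussian binomial by Pascal recursion -/
def gb (q : ℂ) : ℕ → ℕ → ℂ
  | 0, 0 => 1
  | 0, _ + 1 => 0
  | m + 1, 0 => gb q m 0
  | m + 1, k + 1 => q ^ (k + 1) * gb q m (k + 1) + gb q m k

lemma gb_zero (q : ℂ) (m : ℕ) : gb q m 0 = 1 := by
  induction m with
  | zero => rfl
  | succ m ih => rw [gb, ih]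

lemma gb_of_lt (q : ℂ) : ∀ m k, m < k → gb q m k = 0 := by
  intro m
  induction m with
  | zero => intro k hk; match k, hk with | k + 1, _ => rfl
  | succ m ih =>
    intro k hk
    match k, hk with
    | k + 1, hk =>
      rw [gb, ih (k+1) (by omega), ih k (by omega)]
      ring

lemma qfac_succ (q : ℂ) (k : ℕ) : qfac q (k + 1) = qfac q k * (1 - q ^ (k + 1)) :=
  Finset.prod_range_succ _ _

lemma tri_succ : ∀ k : ℕ, k * (k - 1) / 2 + k = (k + 1) * k / 2 := by
  intro k
  match k with
  | 0 => rfl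
  | k + 1 =>
    simp only [Nat.add_sub_cancel]
    have e : (k+1+1) * (k+1) = (k+1) * k + 2 * (k+1) := by ring
    have h2 : 2 ∣ (k+1) * k := by
      rw [mul_comm]; exact (Nat.even_mul_succ_self k).two_dvd
    omega

lemma gb_mul_qfac (q : ℂ) : ∀ m k, k ≤ m →
    gb q m k * (qfac q k * qfac q (m - k)) = qfac q m := by
  intro m
  induction m with
  | zero =>
    intro k hk
    have hk0 : k = 0 := Nat.le_zero.mp hk
    subst hk0
    simp [gb, qfac]
  | succ m ih =>
    intro k hk
    match k with
    | 0 => simp [gb_zero, qfac]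
    | j + 1 =>
      rw [gb]
      rcases eq_or_lt_of_le hk with h | h
      · have hj : j = m := by omega
        rw [hj]
        rw [gb_of_lt q m (m+1) (by omega)]
        rw [show m + 1 - (m + 1) = 0 from by omega]
        simp only [mul_zero, zero_mul, zero_add]
        have hmm := ih m (le_refl m)
        rw [Nat.sub_self] at hmm
        calc gb q m m * (qfac q (m + 1) * qfac q 0)
            = (gb q m m * (qfac q m * qfac q 0)) * (1 - q ^ (m + 1)) := by
              rw [qfac_succ]; ring
          _ = qfac q m * (1 - q ^ (m + 1)) := by rw [hmm]
          _ = qfac q (m + 1) := (qfac_succ q m).symm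
      · have hjm : j + 1 ≤ m := by omega
        have key1 := ih (j + 1) hjm
        have key2 := ih j (by omega)
        have hA : qfac q (m - j) = qfac q (m - (j+1)) * (1 - q ^ (m - j)) := by
          rw [show m - j = (m - (j+1)) + 1 from by omega]
          exact qfac_succ q (m - (j+1))
        have hB : qfac q (j+1) = qfac q j * (1 - q ^ (j+1)) := qfac_succ q j
        have epow : q ^ (j + 1) * q ^ (m - j) = q ^ (m + 1) := by
          rw [← pow_add]; congr 1; omega
        calc (q ^ (j+1) * gb q m (j+1) + gb q m j) * (qfac q (j+1) * qfac q (m + 1 - (j+1)))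
            = q ^ (j+1) * (gb q m (j+1) * (qfac q (j+1) * qfac q (m - (j+1)))) * (1 - q ^ (m - j))
              + (gb q m j * (qfac q j * qfac q (m - j))) * (1 - q ^ (j+1)) := by
              rw [show m + 1 - (j+1) = m - j from by omega, hA, hB]; ring
          _ = q ^ (j+1) * qfac q m * (1 - q ^ (m - j)) + qfac q m * (1 - q ^ (j+1)) := by
              rw [key1, key2]
          _ = qfac q m * (1 - q ^ (m + 1)) := by rw [← epow]; ring
          _ = qfac q (m + 1) := (qfac_succ q m).symm

/-- the finite q-binomial theorem -/
lemma qbinom (q : ℂ) : ∀ (m : ℕ) (x : ℂ),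
    ∏ i ∈ Finset.range m, (1 + x * q ^ i)
      = ∑ k ∈ Finset.range (m + 1), gb q m k * q ^ (k * (k - 1) / 2) * x ^ k := by
  intro m
  induction m with
  | zero => intro x; simp [gb]
  | succ m ih =>
    intro x
    rw [Finset.prod_range_succ' (fun i => 1 + x * q ^ i) m]
    have hx : ∀ i ∈ Finset.range m, (1:ℂ) + x * q ^ (i + 1) = 1 + (x * q) * q ^ i := by
      intro i _; ring
    rw [Finset.prod_congr rfl hx, ih (x * q), pow_zero, mul_one]
    set S := ∑ k ∈ Finset.range (m + 1), gb q m k * q ^ (k * (k - 1) / 2) * (x * q) ^ k with hS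
    -- target: T = S * (1 + x), show T = S + S * x
    rw [Finset.sum_range_succ' (fun k => gb q (m+1) k * q ^ (k * (k - 1) / 2) * x ^ k) (m+1)]
    simp only [gb_zero, pow_zero, mul_one, Nat.zero_mul, Nat.zero_div]
    have expand : ∀ j ∈ Finset.range (m + 1),
        gb q (m+1) (j+1) * q ^ ((j+1) * (j+1-1) / 2) * x ^ (j+1)
          = gb q m (j+1) * (q ^ (j+1) * q ^ ((j+1) * j / 2)) * x ^ (j+1)
            + (gb q m j * q ^ (j * (j-1) / 2) * (x*q) ^ j) * x := by
      intro j _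
      simp only [Nat.add_sub_cancel, gb]
      rw [show (j+1) * j / 2 = j * (j-1) / 2 + j from (tri_succ j).symm, pow_add, mul_pow]
      ring
    rw [Finset.sum_congr rfl expand, Finset.sum_add_distrib, ← Finset.sum_mul]
    have claimA : ∑ j ∈ Finset.range (m+1), gb q m j * q ^ (j * (j-1) / 2) * (x*q) ^ j = S := rfl
    have claimB : (∑ j ∈ Finset.range (m+1),
        gb q m (j+1) * (q ^ (j+1) * q ^ ((j+1) * j / 2)) * x ^ (j+1)) + 1 = S := by
      rw [hS, Finset.sum_range_succ' (fun k => gb q m k * q ^ (k * (k - 1) / 2) * (x * q) ^ k) m]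
      simp only [gb_zero, pow_zero, mul_one, Nat.zero_mul, Nat.zero_div]
      congr 1
      rw [Finset.sum_range_succ]
      rw [gb_of_lt q m (m+1) (by omega)]
      simp only [zero_mul, add_zero]
      apply Finset.sum_congr rfl
      intro j _
      simp only [Nat.add_sub_cancel]
      rw [mul_pow, pow_succ]
      ring
    rw [claimA, ← claimB]
    ring

section Bounds
variable {q : ℂ} (hq : ‖q‖ < 1)
include hq

lemma one_sub_pow_ne (n : ℕ) : 1 - q ^ (n + 1) ≠ 0 := by
  intro h
  have h1 : q ^ (n+1) = 1 := by linear_combination -h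
  have : ‖q‖ ^ (n+1) < 1 := pow_lt_one₀ (norm_nonneg q) hq (by omega)
  rw [← norm_pow, h1, norm_one] at this
  exact lt_irrefl _ this

lemma one_add_pow_ne (n : ℕ) : 1 + q ^ (n + 1) ≠ 0 := by
  intro h
  have h1 : q ^ (n+1) = -1 := by linear_combination h
  have : ‖q‖ ^ (n+1) < 1 := pow_lt_one₀ (norm_nonneg q) hq (by omega)
  rw [← norm_pow, h1] at this
  simp at this

lemma summable_norm_pow_succ : Summable (fun n : ℕ => ‖q‖ ^ (n + 1)) := by
  have := (summable_geometric_of_lt_one (norm_nonneg q) hq).mul_left ‖q‖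
  refine this.congr fun n => ?_
  rw [← pow_succ']

lemma sum_pow_succ_le (k : ℕ) : ∑ j ∈ Finset.range k, ‖q‖ ^ (j + 1) ≤ ‖q‖ / (1 - ‖q‖) := by
  have h1 : ∑ j ∈ Finset.range k, ‖q‖ ^ (j+1) ≤ ∑' j : ℕ, ‖q‖ ^ (j+1) :=
    Summable.sum_le_tsum _ (fun i _ => by positivity) (summable_norm_pow_succ hq)
  have h2 : ∑' j : ℕ, ‖q‖ ^ (j+1) = ‖q‖ * (1 - ‖q‖)⁻¹ := by
    calc ∑' j : ℕ, ‖q‖ ^ (j+1) = ∑' j : ℕ, ‖q‖ * ‖q‖ ^ j := by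
          apply tsum_congr; intro j; rw [← pow_succ']
      _ = ‖q‖ * (1 - ‖q‖)⁻¹ := by
          rw [tsum_mul_left, tsum_geometric_of_lt_one (norm_nonneg q) hq]
  rw [h2] at h1
  rw [div_eq_mul_inv]
  exact h1

lemma qfac_norm_upper (k : ℕ) : ‖qfac q k‖ ≤ Real.exp (‖q‖ / (1 - ‖q‖)) := by
  rw [qfac, norm_prod]
  calc ∏ j ∈ Finset.range k, ‖1 - q ^ (j+1)‖
      ≤ ∏ j ∈ Finset.range k, Real.exp (‖q‖ ^ (j+1)) := by
        apply Finset.prod_le_prod (fun j _ => norm_nonneg _)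
        intro j _
        calc ‖1 - q ^ (j+1)‖ ≤ ‖(1:ℂ)‖ + ‖q ^ (j+1)‖ := norm_sub_le _ _
          _ = 1 + ‖q‖ ^ (j+1) := by rw [norm_one, norm_pow]
          _ ≤ Real.exp (‖q‖ ^ (j+1)) := by
              linarith [Real.add_one_le_exp (‖q‖ ^ (j+1))]
    _ = Real.exp (∑ j ∈ Finset.range k, ‖q‖ ^ (j+1)) := (Real.exp_sum _ _).symm
    _ ≤ Real.exp (‖q‖ / (1 - ‖q‖)) := Real.exp_le_exp.mpr (sum_pow_succ_le hq k)

omit hq in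
lemma exp_neg_le_one_sub {r a : ℝ} (h0 : 0 ≤ a) (har : a ≤ r) (hr : r < 1) :
    Real.exp (-(a / (1 - r))) ≤ 1 - a := by
  have h1r : 0 < 1 - r := by linarith
  have key := Real.add_one_le_exp (a / (1 - r))
  rw [Real.exp_neg]
  rw [inv_le_comm₀ (Real.exp_pos _) (by nlinarith [div_nonneg h0 h1r.le])]
  calc (1 - a)⁻¹ ≤ 1 + a / (1 - r) := by
        rw [inv_le_iff_one_le_mul₀ (by linarith)]
        have expand : (1 + a / (1-r)) * (1 - a) = 1 + (a * (r - a)) / (1 - r) := by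
          field_simp
          ring
        rw [expand]
        have : 0 ≤ a * (r - a) / (1 - r) := by
          apply div_nonneg _ h1r.le
          exact mul_nonneg h0 (by linarith)
        linarith
    _ ≤ Real.exp (a / (1 - r)) := by linarith

lemma qfac_norm_lower (k : ℕ) :
    Real.exp (-(‖q‖ / (1 - ‖q‖) / (1 - ‖q‖))) ≤ ‖qfac q k‖ := by
  have h1r : 0 < 1 - ‖q‖ := by linarith
  rw [qfac, norm_prod]
  have step1 : ∀ j ∈ Finset.range k,
      Real.exp (-(‖q‖ ^ (j+1) / (1 - ‖q‖))) ≤ ‖1 - q ^ (j+1)‖ := by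
    intro j _
    have hb : ‖q‖ ^ (j+1) ≤ ‖q‖ := by
      calc ‖q‖ ^ (j+1) ≤ ‖q‖ ^ 1 := by
            exact pow_le_pow_of_le_one (norm_nonneg q) hq.le (by omega)
        _ = ‖q‖ := pow_one _
    calc Real.exp (-(‖q‖ ^ (j+1) / (1 - ‖q‖)))
        ≤ 1 - ‖q‖ ^ (j+1) :=
          exp_neg_le_one_sub (by positivity) hb hq
      _ ≤ ‖1 - q ^ (j+1)‖ := by
          have h := abs_norm_sub_norm_le (1 : ℂ) (q ^ (j+1))
          rw [norm_one, norm_pow] at h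
          have := abs_le.mp h
          linarith [this.1, this.2]
  calc Real.exp (-(‖q‖ / (1 - ‖q‖) / (1 - ‖q‖)))
      ≤ Real.exp (∑ j ∈ Finset.range k, -(‖q‖ ^ (j+1) / (1 - ‖q‖))) := by
        apply Real.exp_le_exp.mpr
        rw [Finset.sum_neg_distrib, neg_le_neg_iff, ← Finset.sum_div]
        exact div_le_div_of_nonneg_right (sum_pow_succ_le hq k) h1r.le
    _ = ∏ j ∈ Finset.range k, Real.exp (-(‖q‖ ^ (j+1) / (1 - ‖q‖))) := Real.exp_sum _ _
    _ ≤ ∏ j ∈ Finset.range k, ‖1 - q ^ (j+1)‖ := by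
        apply Finset.prod_le_prod (fun j _ => (Real.exp_pos _).le) step1

end Bounds

section Limits
variable {q : ℂ} (hq : ‖q‖ < 1)
include hq

lemma qfac_ne (k : ℕ) : qfac q k ≠ 0 := by
  intro h
  have := qfac_norm_lower hq k
  rw [h, norm_zero] at this
  exact absurd this (not_le.mpr (Real.exp_pos _))

omit hq in
lemma mult_one_add {f : ℕ → ℂ} (hf : Summable fun n => ‖f n‖) (h1 : ∀ n, 1 + f n ≠ 0) :
    Multipliable fun n => 1 + f n := by
  exact multipliable_one_add_of_summable hf

lemma mult_one_sub_pow : Multipliable fun n : ℕ => 1 - q ^ (n + 1) := by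
  have := mult_one_add (f := fun n : ℕ => -(q ^ (n+1)))
    (by simpa using summable_norm_pow_succ hq)
    (fun n => by rw [← sub_eq_add_neg]; exact one_sub_pow_ne hq n)
  exact this.congr fun n => by ring

lemma mult_one_add_pow : Multipliable fun n : ℕ => 1 + q ^ (n + 1) :=
  mult_one_add (by simpa using summable_norm_pow_succ hq) (fun n => one_add_pow_ne hq n)

lemma tendsto_qfac : Tendsto (qfac q) atTop (𝓝 (∏' n : ℕ, (1 - q ^ (n + 1)))) :=
  (mult_one_sub_pow hq).hasProd.tendsto_prod_nat

lemma tprod_one_sub_ne : (∏' n : ℕ, (1 - q ^ (n + 1))) ≠ 0 := by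
  intro h
  have hlim : Tendsto (fun k => ‖qfac q k‖) atTop (𝓝 0) := by
    simpa [h] using (tendsto_qfac hq).norm
  have hle : Real.exp (-(‖q‖ / (1 - ‖q‖) / (1 - ‖q‖))) ≤ 0 :=
    ge_of_tendsto' hlim (fun k => qfac_norm_lower hq k)
  exact absurd hle (not_le.mpr (Real.exp_pos _))

lemma tendsto_two_mul : Tendsto (fun m : ℕ => 2 * m) atTop atTop :=
  tendsto_atTop_atTop.mpr fun b => ⟨b, fun a ha => by omega⟩

lemma gb_eq_of_le {m k : ℕ} (hk : k ≤ m) :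
    gb q m k = qfac q m * ((qfac q k)⁻¹ * (qfac q (m - k))⁻¹) := by
  have h := gb_mul_qfac q m k hk
  rw [← h]
  field_simp [qfac_ne hq]

lemma tendsto_gb_add (n : ℕ) :
    Tendsto (fun m => gb q (2 * m) (m + n)) atTop
      (𝓝 (∏' n : ℕ, (1 - q ^ (n + 1)))⁻¹) := by
  set P := ∏' n : ℕ, (1 - q ^ (n + 1)) with hP
  have hPne := tprod_one_sub_ne hq
  have l1 : Tendsto (fun m => qfac q (2 * m)) atTop (𝓝 P) :=
    (tendsto_qfac hq).comp (tendsto_two_mul hq)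
  have l2 : Tendsto (fun m => qfac q (m + n)) atTop (𝓝 P) :=
    (tendsto_qfac hq).comp (tendsto_add_atTop_nat n)
  have l3 : Tendsto (fun m => qfac q (m - n)) atTop (𝓝 P) :=
    (tendsto_qfac hq).comp (tendsto_sub_atTop_nat n)
  have comb := l1.mul ((l2.inv₀ hPne).mul (l3.inv₀ hPne))
  have hval : P * (P⁻¹ * P⁻¹) = P⁻¹ := by field_simp
  rw [hval] at comb
  apply Tendsto.congr' ?_ comb
  filter_upwards [eventually_ge_atTop n] with m hm
  rw [gb_eq_of_le hq (by omega : m + n ≤ 2 * m),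
    show 2 * m - (m + n) = m - n from by omega]

lemma tendsto_gb_sub (n : ℕ) :
    Tendsto (fun m => gb q (2 * m) (m - (n + 1))) atTop
      (𝓝 (∏' n : ℕ, (1 - q ^ (n + 1)))⁻¹) := by
  set P := ∏' n : ℕ, (1 - q ^ (n + 1)) with hP
  have hPne := tprod_one_sub_ne hq
  have l1 : Tendsto (fun m => qfac q (2 * m)) atTop (𝓝 P) :=
    (tendsto_qfac hq).comp (tendsto_two_mul hq)
  have l2 : Tendsto (fun m => qfac q (m - (n + 1))) atTop (𝓝 P) :=
    (tendsto_qfac hq).comp (tendsto_sub_atTop_nat (n + 1))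
  have l3 : Tendsto (fun m => qfac q (m + (n + 1))) atTop (𝓝 P) :=
    (tendsto_qfac hq).comp (tendsto_add_atTop_nat (n + 1))
  have comb := l1.mul ((l2.inv₀ hPne).mul (l3.inv₀ hPne))
  have hval : P * (P⁻¹ * P⁻¹) = P⁻¹ := by field_simp
  rw [hval] at comb
  apply Tendsto.congr' ?_ comb
  filter_upwards [eventually_ge_atTop (n + 1)] with m hm
  rw [gb_eq_of_le hq (by omega : m - (n + 1) ≤ 2 * m),
    show 2 * m - (m - (n + 1)) = m + (n + 1) from by omega]

lemma gb_norm_le {m k : ℕ} (hk : k ≤ m) :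
    ‖gb q m k‖ ≤ Real.exp (‖q‖ / (1 - ‖q‖))
      * (Real.exp (-(‖q‖ / (1 - ‖q‖) / (1 - ‖q‖))))⁻¹
      * (Real.exp (-(‖q‖ / (1 - ‖q‖) / (1 - ‖q‖))))⁻¹ := by
  rw [gb_eq_of_le hq hk, norm_mul, norm_mul, norm_inv, norm_inv]
  have c1 := qfac_norm_upper hq m
  have c2 := qfac_norm_lower hq k
  have c3 := qfac_norm_lower hq (m - k)
  have e := Real.exp_pos (-(‖q‖ / (1 - ‖q‖) / (1 - ‖q‖)))
  have n2 : ‖qfac q k‖ > 0 := lt_of_lt_of_le e c2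
  have n3 : ‖qfac q (m - k)‖ > 0 := lt_of_lt_of_le e c3
  rw [mul_assoc]
  apply mul_le_mul c1 ?_ (by positivity) (Real.exp_pos _).le
  apply mul_le_mul (inv_anti₀ e c2) (inv_anti₀ e c3) (by positivity) (by positivity)

end Limits

section FiniteId

lemma two_dvd_mul_succ (a : ℕ) : 2 ∣ a * (a + 1) := (Nat.even_mul_succ_self a).two_dvd

lemma two_dvd_mul_pred (b : ℕ) : 2 ∣ b * (b - 1) := by
  match b with
  | 0 => simp
  | c + 1 =>
    simp only [Nat.add_sub_cancel]
    rw [mul_comm]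
    exact (Nat.even_mul_succ_self c).two_dvd

/-- the exponent (|k-m|² + (k-m))/2 , written ℕ-subtraction-safely -/
def Eexp (m k : ℕ) : ℕ := (k - m) * (k - m + 1) / 2 + (m - k) * (m - k - 1) / 2

lemma Eexp_key (m k : ℕ) :
    Eexp m k + m * (m + 1) / 2 + m * k = m * m + k * (k - 1) / 2 + k := by
  have d1 := two_dvd_mul_succ (k - m)
  have d2 := two_dvd_mul_pred (m - k)
  have d3 := two_dvd_mul_succ m
  have d4 := two_dvd_mul_pred k
  have goal2 : (k-m) * (k-m+1) + (m-k) * (m-k-1) + m * (m+1) + 2 * (m*k)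
      = 2 * (m*m) + k * (k-1) + 2 * k := by
    rcases le_total m k with h | h
    · obtain ⟨d, rfl⟩ : ∃ d, k = m + d := ⟨k - m, by omega⟩
      rw [show m + d - m = d from by omega, show m - (m + d) = 0 from by omega]
      rcases Nat.eq_zero_or_pos (m + d) with h0 | h1
      · obtain ⟨rfl, rfl⟩ : m = 0 ∧ d = 0 := by omega
        simp
      · zify [h1]
        ring
    · obtain ⟨d, rfl⟩ : ∃ d, m = k + d := ⟨m - k, by omega⟩
      rw [show k - (k + d) = 0 from by omega, show k + d - k = d from by omega]
      rcases Nat.eq_zero_or_pos d with h0 | h1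
      · subst h0
        rcases Nat.eq_zero_or_pos k with hk0 | hk1
        · subst hk0; simp
        · zify [hk1]; ring
      · rcases Nat.eq_zero_or_pos k with hk0 | hk1
        · subst hk0
          simp only [Nat.zero_mul, Nat.mul_zero, Nat.zero_add, Nat.add_zero, Nat.zero_sub,
            Nat.sub_zero]
          zify [h1]
          ring
        · zify [h1, hk1]
          ring
  unfold Eexp
  omega

lemma sum_range_add_one (m : ℕ) : ∑ i ∈ Finset.range m, (i + 1) = m * (m + 1) / 2 := by
  induction m with
  | zero => rfl
  | succ m ih =>
    rw [Finset.sum_range_succ, ih]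
    have h1 := two_dvd_mul_succ m
    have h2 := two_dvd_mul_succ (m + 1)
    have e : (m+1) * (m+1+1) = m * (m+1) + 2 * (m+1) := by ring
    omega

lemma finiteJTP {q : ℂ} (hq0 : q ≠ 0) (m : ℕ) :
    (∏ n ∈ Finset.range m, (1 + q ^ (n + 1))) * (∏ n ∈ Finset.range m, (1 + q ^ n))
      = ∑ k ∈ Finset.range (2 * m + 1), gb q (2 * m) k * q ^ (Eexp m k) := by
  have hqm : (q : ℂ) ^ m ≠ 0 := pow_ne_zero m hq0
  set x : ℂ := q * (q ^ m)⁻¹ with hx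
  set c : ℂ := q ^ (m * (m+1) / 2) * (q ^ (m * m))⁻¹ with hc
  have hcne : c ≠ 0 := mul_ne_zero (pow_ne_zero _ hq0) (inv_ne_zero (pow_ne_zero _ hq0))
  rw [two_mul]
  have hb := qbinom q (m + m) x
  rw [Finset.prod_range_add] at hb
  have e2 : ∀ i ∈ Finset.range m, (1 : ℂ) + x * q ^ (m + i) = 1 + q ^ (i + 1) := by
    intro i _
    rw [hx, pow_add, show q * (q ^ m)⁻¹ * (q ^ m * q ^ i) = (q ^ m)⁻¹ * q ^ m * (q * q ^ i)
      from by ring, inv_mul_cancel₀ hqm, one_mul, ← pow_succ']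
  have e1 : ∏ i ∈ Finset.range m, ((1 : ℂ) + x * q ^ i)
      = c * ∏ j ∈ Finset.range m, (1 + q ^ j) := by
    have term : ∀ i ∈ Finset.range m, (1 : ℂ) + x * q ^ i
        = q ^ (i+1) * (q ^ m)⁻¹ * (1 + q ^ (m - 1 - i)) := by
      intro i hi
      have him : i < m := Finset.mem_range.mp hi
      have epow : q ^ (i + 1) * q ^ (m - 1 - i) = q ^ m := by
        rw [← pow_add]; congr 1; omega
      have expand : q ^ (i+1) * (q ^ m)⁻¹ * (1 + q ^ (m - 1 - i))
          = (q ^ (i+1) + q ^ (i+1) * q ^ (m - 1 - i)) * (q ^ m)⁻¹ := by ring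
      rw [expand, epow, add_mul, mul_inv_cancel₀ hqm, hx, pow_succ]
      ring
    rw [Finset.prod_congr rfl term, Finset.prod_mul_distrib, Finset.prod_mul_distrib,
      Finset.prod_range_reflect (fun j => 1 + q ^ j) m,
      Finset.prod_pow_eq_pow_sum (Finset.range m) (fun i => i + 1) q,
      sum_range_add_one, Finset.prod_const, inv_pow, ← pow_mul, hc,
      Finset.card_range]
  have tpow : ∀ k ∈ Finset.range (m + m + 1),
      gb q (m+m) k * q ^ (k * (k - 1) / 2) * x ^ k = c * (gb q (m+m) k * q ^ (Eexp m k)) := by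
    intro k _
    have hxk : x ^ k = q ^ k * (q ^ (m * k))⁻¹ := by
      rw [hx, mul_pow, inv_pow, ← pow_mul]
    have main : q ^ (k * (k-1) / 2) * q ^ k / q ^ (m * k)
        = q ^ (m * (m+1) / 2) * q ^ (Eexp m k) / q ^ (m * m) := by
      rw [div_eq_div_iff (pow_ne_zero _ hq0) (pow_ne_zero _ hq0), ← pow_add, ← pow_add,
        ← pow_add, ← pow_add]
      congr 1
      have := Eexp_key m k
      omega
    calc gb q (m+m) k * q ^ (k * (k-1) / 2) * x ^ k
        = gb q (m+m) k * (q ^ (k * (k-1) / 2) * q ^ k / q ^ (m * k)) := by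
          rw [hxk]; ring
      _ = gb q (m+m) k * (q ^ (m * (m+1) / 2) * q ^ (Eexp m k) / q ^ (m * m)) := by rw [main]
      _ = c * (gb q (m+m) k * q ^ (Eexp m k)) := by rw [hc]; ring
  rw [Finset.prod_congr rfl e2, e1, Finset.sum_congr rfl tpow, ← Finset.mul_sum] at hb
  apply mul_left_cancel₀ hcne
  calc c * ((∏ n ∈ Finset.range m, (1 + q ^ (n + 1))) * ∏ n ∈ Finset.range m, (1 + q ^ n))
      = c * (∏ j ∈ Finset.range m, (1 + q ^ j)) * ∏ n ∈ Finset.range m, (1 + q ^ (n+1)) := by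
        ring
    _ = c * ∑ k ∈ Finset.range (m + m + 1), gb q (m + m) k * q ^ Eexp m k := hb

end FiniteId

section GaussId

lemma Eexp_add (m n : ℕ) : Eexp m (m + n) = n * (n + 1) / 2 := by
  unfold Eexp
  rw [show m + n - m = n from by omega, show m - (m + n) = 0 from by omega]
  simp

lemma Eexp_sub (m n : ℕ) (h : n + 1 ≤ m) : Eexp m (m - (n + 1)) = n * (n + 1) / 2 := by
  unfold Eexp
  rw [show m - (n+1) - m = 0 from by omega, show m - (m - (n+1)) = n + 1 from by omega]
  simp [Nat.add_sub_cancel, mul_comm]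

theorem gauss {q : ℂ} (hq : ‖q‖ < 1) :
    (∑' n : ℕ, q ^ (n * (n + 1) / 2)) * ∏' n : ℕ, (1 - q ^ (n + 1))
      = (∏' n : ℕ, (1 - (q ^ 2) ^ (n + 1))) ^ 2 := by
  rcases eq_or_ne q 0 with rfl | hq0
  · have hψ : (∑' n : ℕ, (0:ℂ) ^ (n * (n + 1) / 2)) = 1 := by
      rw [tsum_eq_single 0]
      · norm_num
      · intro n hn
        have h2 : 2 ≤ n * (n + 1) := by
          have h1 : 1 ≤ n := Nat.one_le_iff_ne_zero.mpr hn
          nlinarith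
        rw [zero_pow (by omega)]
    have hp : ∀ n : ℕ, (1 : ℂ) - (0:ℂ) ^ (n+1) = 1 := by
      intro n; rw [zero_pow (by omega)]; ring
    have hp2 : ∀ n : ℕ, (1 : ℂ) - ((0:ℂ)^2) ^ (n+1) = 1 := by
      intro n; rw [show ((0:ℂ)^2) = 0 from by norm_num, zero_pow (by omega)]; ring
    rw [hψ, tprod_congr hp, tprod_congr hp2, tprod_one]
    norm_num
  · set r := ‖q‖ with hr
    have hr0 : 0 ≤ r := norm_nonneg q
    set P := ∏' n : ℕ, (1 - q ^ (n + 1)) with hP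
    set A := ∏' n : ℕ, (1 + q ^ (n + 1)) with hA
    set Ψ := ∑' n : ℕ, q ^ (n * (n + 1) / 2) with hΨ
    have hPne : P ≠ 0 := tprod_one_sub_ne hq
    -- limit of the LHS of the finite identity
    have tA : Tendsto (fun m => ∏ n ∈ Finset.range m, (1 + q ^ (n + 1))) atTop (𝓝 A) :=
      (mult_one_add_pow hq).hasProd.tendsto_prod_nat
    have multB : Multipliable fun n : ℕ => 1 + q ^ n := by
      apply mult_one_add
      · have : Summable fun n : ℕ => r ^ n := summable_geometric_of_lt_one hr0 hq
        exact this.congr fun n => by rw [norm_pow]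
      · intro n
        match n with
        | 0 => norm_num
        | n + 1 => exact one_add_pow_ne hq n
    have tB0 : Tendsto (fun m => ∏ n ∈ Finset.range m, (1 + q ^ n)) atTop
        (𝓝 (∏' n : ℕ, (1 + q ^ n))) := multB.hasProd.tendsto_prod_nat
    have hBA : (∏' n : ℕ, (1 + q ^ n)) = A * 2 := by
      apply tendsto_nhds_unique (f := fun m => ∏ n ∈ Finset.range (m + 1), (1 + q ^ n))
        (tB0.comp (tendsto_add_atTop_nat 1))
      have he : ∀ m : ℕ, ∏ n ∈ Finset.range (m + 1), (1 + q ^ n)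
          = (∏ n ∈ Finset.range m, (1 + q ^ (n + 1))) * 2 := by
        intro m
        rw [Finset.prod_range_succ' (fun n => 1 + q ^ n) m]
        norm_num
      exact Tendsto.congr (fun m => (he m).symm) (tA.mul_const 2)
    have tLHS : Tendsto (fun m => (∏ n ∈ Finset.range m, (1 + q ^ (n + 1)))
        * ∏ n ∈ Finset.range m, (1 + q ^ n)) atTop (𝓝 (A * (A * 2))) :=
      tA.mul (hBA ▸ tB0)
    -- limit of the RHS of the finite identity, via dominated convergence
    set K := Real.exp (r / (1 - r)) * (Real.exp (-(r / (1 - r) / (1 - r))))⁻¹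
      * (Real.exp (-(r / (1 - r) / (1 - r))))⁻¹ with hK
    have hK0 : 0 < K := by positivity
    have hbound_sum : Summable (fun n : ℕ => K * r ^ n) :=
      (summable_geometric_of_lt_one hr0 hq).mul_left K
    have norm_term : ∀ (k m n : ℕ), k ≤ m + m →
        ‖gb q (m + m) k * q ^ (n * (n + 1) / 2)‖ ≤ K * r ^ n := by
      intro k m n hk
      rw [norm_mul, norm_pow]
      have h1 : ‖gb q (m+m) k‖ ≤ K := by
        have := gb_norm_le hq (m := m + m) (k := k) hk
        simpa [hK] using this
      have h2 : r ^ (n * (n + 1) / 2) ≤ r ^ n := by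
        apply pow_le_pow_of_le_one hr0 hq.le
        rcases Nat.eq_zero_or_pos n with rfl | hn
        · simp
        · have h3 : n * 2 ≤ n * (n + 1) := Nat.mul_le_mul_left n (by omega)
          omega
      exact mul_le_mul h1 h2 (by positivity) hK0.le
    -- family 1 : k = m - (n+1)
    have t1 : Tendsto (fun m => ∑' n : ℕ,
        (if n < m then gb q (m + m) (m - (n + 1)) * q ^ (n * (n + 1) / 2) else 0)) atTop
        (𝓝 (∑' n : ℕ, P⁻¹ * q ^ (n * (n + 1) / 2))) := by
      apply tendsto_tsum_of_dominated_convergence hbound_sum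
      · intro n
        have base : Tendsto (fun m => gb q (m + m) (m - (n + 1))) atTop (𝓝 P⁻¹) :=
          Tendsto.congr (fun m => by rw [two_mul]) (tendsto_gb_sub hq n)
        apply Tendsto.congr' ?_ (base.mul_const (q ^ (n * (n + 1) / 2)))
        filter_upwards [eventually_ge_atTop (n + 1)] with m hm
        rw [if_pos (by omega)]
      · filter_upwards [] with m
        intro n
        by_cases hnm : n < m
        · rw [if_pos hnm]
          exact norm_term _ m n (by omega)
        · rw [if_neg hnm, norm_zero]
          positivity
    -- family 2 : k = m + n
    have t2 : Tendsto (fun m => ∑' n : ℕ,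
        (if n < m + 1 then gb q (m + m) (m + n) * q ^ (n * (n + 1) / 2) else 0)) atTop
        (𝓝 (∑' n : ℕ, P⁻¹ * q ^ (n * (n + 1) / 2))) := by
      apply tendsto_tsum_of_dominated_convergence hbound_sum
      · intro n
        have base : Tendsto (fun m => gb q (m + m) (m + n)) atTop (𝓝 P⁻¹) :=
          Tendsto.congr (fun m => by rw [two_mul]) (tendsto_gb_add hq n)
        apply Tendsto.congr' ?_ (base.mul_const (q ^ (n * (n + 1) / 2)))
        filter_upwards [eventually_ge_atTop n] with m hm
        rw [if_pos (by omega)]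
      · filter_upwards [] with m
        intro n
        by_cases hnm : n < m + 1
        · rw [if_pos hnm]
          exact norm_term _ m n (by omega)
        · rw [if_neg hnm, norm_zero]
          positivity
    have hPψ : (∑' n : ℕ, P⁻¹ * q ^ (n * (n + 1) / 2)) = P⁻¹ * Ψ := tsum_mul_left
    -- identify the finite sums with the truncated tsums
    have hsplit : ∀ m : ℕ,
        (∑ k ∈ Finset.range (m + m + 1), gb q (m + m) k * q ^ (Eexp m k))
          = (∑' n : ℕ, (if n < m then gb q (m + m) (m - (n + 1)) * q ^ (n * (n + 1) / 2) else 0))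
            + (∑' n : ℕ, (if n < m + 1 then gb q (m + m) (m + n) * q ^ (n * (n + 1) / 2) else 0)) := by
      intro m
      have e1 : (∑' n : ℕ, (if n < m then gb q (m + m) (m - (n + 1)) * q ^ (n * (n + 1) / 2) else 0))
          = ∑ n ∈ Finset.range m, gb q (m + m) (m - (n + 1)) * q ^ (n * (n + 1) / 2) := by
        rw [tsum_eq_sum (s := Finset.range m) (fun b hb => if_neg (by simpa using hb))]
        exact Finset.sum_congr rfl fun n hn => if_pos (Finset.mem_range.mp hn)
      have e2 : (∑' n : ℕ, (if n < m + 1 then gb q (m + m) (m + n) * q ^ (n * (n + 1) / 2) else 0))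
          = ∑ n ∈ Finset.range (m + 1), gb q (m + m) (m + n) * q ^ (n * (n + 1) / 2) := by
        rw [tsum_eq_sum (s := Finset.range (m + 1)) (fun b hb => if_neg (by simpa using hb))]
        exact Finset.sum_congr rfl fun n hn => if_pos (Finset.mem_range.mp hn)
      rw [e1, e2]
      rw [show m + m + 1 = m + (m + 1) from rfl, Finset.sum_range_add]
      congr 1
      · rw [← Finset.sum_range_reflect]
        apply Finset.sum_congr rfl
        intro n hn
        have hnm : n < m := Finset.mem_range.mp hn
        rw [show m - 1 - n = m - (n + 1) from by omega, Eexp_sub m n (by omega)]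
      · apply Finset.sum_congr rfl
        intro n _
        rw [Eexp_add m n]
    -- combine
    have tRHS : Tendsto (fun m => ∑ k ∈ Finset.range (m + m + 1), gb q (m + m) k * q ^ (Eexp m k))
        atTop (𝓝 (P⁻¹ * Ψ + P⁻¹ * Ψ)) := by
      rw [← hPψ]
      exact Tendsto.congr (fun m => (hsplit m).symm) (t1.add t2)
    have main : A * (A * 2) = P⁻¹ * Ψ + P⁻¹ * Ψ := by
      apply tendsto_nhds_unique ?_ tRHS
      apply Tendsto.congr ?_ tLHS
      intro m
      have := finiteJTP hq0 m
      rw [two_mul] at this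
      exact this
    have hψPA : Ψ = P * (A * A) := by
      have h2 : P * (A * (A * 2)) = P * (P⁻¹ * Ψ + P⁻¹ * Ψ) := by rw [main]
      have h3 : P * (P⁻¹ * Ψ + P⁻¹ * Ψ) = 2 * Ψ := by
        field_simp
        ring
      rw [h3] at h2
      have : 2 * (P * (A * A)) = 2 * Ψ := by rw [← h2]; ring
      have h4 := mul_left_cancel₀ (two_ne_zero (α := ℂ)) this
      exact h4.symm
    have hPA : P * A = ∏' n : ℕ, (1 - (q ^ 2) ^ (n + 1)) := by
      rw [hP, hA, ← Multipliable.tprod_mul (mult_one_sub_pow hq) (mult_one_add_pow hq)]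
      apply tprod_congr
      intro n
      have : (q ^ 2) ^ (n + 1) = (q ^ (n + 1)) ^ 2 := by
        rw [← pow_mul, ← pow_mul, mul_comm]
      rw [this]
      ring
    rw [hψPA, ← hPA]
    ring

end GaussId

end PsiAux

/-- For |q| < 1, Ψ(q) Ψ(q²) (q;q)_∞ = (q⁴;q⁴)_∞² (q²;q²)_∞, where
Ψ(q) = ∑_{n≥0} q^{n(n+1)/2}.  (Equivalently η(4τ)² = e^{3πiτ/4} η(τ)Ψ(τ)Ψ(2τ)/η(2τ).) -/
theorem psi_eta_identity (q : ℂ) (hq : ‖q‖ < 1) :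
    (∑' n : ℕ, q ^ (n * (n + 1) / 2)) * (∑' n : ℕ, q ^ (n * (n + 1))) *
        ∏' n : ℕ, (1 - q ^ (n + 1)) =
      (∏' n : ℕ, (1 - q ^ (4 * (n + 1))) ^ 2) * ∏' n : ℕ, (1 - q ^ (2 * (n + 1))) := by
  have hq2 : ‖q ^ 2‖ < 1 := by
    rw [norm_pow]
    exact pow_lt_one₀ (norm_nonneg q) hq (by omega)
  have hq4 : ‖(q ^ 2) ^ 2‖ < 1 := by
    rw [norm_pow]
    exact pow_lt_one₀ (norm_nonneg _) hq2 (by omega)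
  -- rewrite the second theta sum in base q²
  have e0 : (∑' n : ℕ, q ^ (n * (n + 1))) = ∑' n : ℕ, (q ^ 2) ^ (n * (n + 1) / 2) := by
    apply tsum_congr
    intro n
    rw [← pow_mul]
    congr 1
    have := two_dvd_mul_succ n
    omega
  -- rewrite the two products on the right in bases q², q⁴
  have e2 : (∏' n : ℕ, (1 - q ^ (2 * (n + 1)))) = ∏' n : ℕ, (1 - (q ^ 2) ^ (n + 1)) := by
    apply tprod_congr
    intro n
    rw [← pow_mul]
  have e4 : (∏' n : ℕ, (1 - q ^ (4 * (n + 1))) ^ 2)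
      = (∏' n : ℕ, (1 - ((q ^ 2) ^ 2) ^ (n + 1))) ^ 2 := by
    have h1 : ∀ n : ℕ, (1 - q ^ (4 * (n + 1))) ^ 2
        = (1 - ((q ^ 2) ^ 2) ^ (n + 1)) * (1 - ((q ^ 2) ^ 2) ^ (n + 1)) := by
      intro n
      rw [← pow_mul, ← pow_mul, show 2 * (2 * (n + 1)) = 4 * (n + 1) from by ring, sq]
    rw [tprod_congr h1, Multipliable.tprod_mul (mult_one_sub_pow hq4) (mult_one_sub_pow hq4)]
    exact (pow_two _).symm
  rw [e0, e2, e4]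
  set Ψ₁ := ∑' n : ℕ, q ^ (n * (n + 1) / 2)
  set Ψ₂ := ∑' n : ℕ, (q ^ 2) ^ (n * (n + 1) / 2)
  set P := ∏' n : ℕ, (1 - q ^ (n + 1))
  set D2 := ∏' n : ℕ, (1 - (q ^ 2) ^ (n + 1))
  set D4 := ∏' n : ℕ, (1 - ((q ^ 2) ^ 2) ^ (n + 1))
  have g1 : Ψ₁ * P = D2 ^ 2 := gauss hq
  have g2 : Ψ₂ * D2 = D4 ^ 2 := gauss hq2
  calc Ψ₁ * Ψ₂ * P = (Ψ₁ * P) * Ψ₂ := by ring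
    _ = D2 ^ 2 * Ψ₂ := by rw [g1]
    _ = D2 * (Ψ₂ * D2) := by ring
    _ = D2 * D4 ^ 2 := by rw [g2]
    _ = D4 ^ 2 * D2 := by ring
end
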